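/- arXiv:1610.04260 — 6 statements merged into one kernel-verified Lean document; each statement's English description precedes it below -/
import Mathlib

section
/- The point x_i = √(b_i/(a_i+λ)), with λ ≥ 0 the unique solution of Σ_i √(b_i/(a_i+λ)) = c, is the global minimizer of Σ_i (a_i·x_i + b_i/x_i) subject to x_i > 0 and Σ_i x_i ≤ c, provided Σ_i √(b_i/a_i) ≥ c. -/
open Finset in
/-- The point `x_i = √(b_i/(a_i+λ))`, with `λ ≥ 0` solving `Σ_i √(b_i/(a_i+λ)) = c`,
is the global minimizer of `Σ_i (a_i·x_i + b_i/x_i)` subject to `x_i > 0` and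
`Σ_i x_i ≤ c`, provided `Σ_i √(b_i/a_i) ≥ c`. -/
theorem stmt4 (n : ℕ) (a b : Fin n → ℝ) (c l : ℝ)
    (ha : ∀ i, 0 < a i) (hb : ∀ i, 0 < b i) (hc : 0 < c) (hl : 0 ≤ l)
    (hsol : ∑ i, Real.sqrt (b i / (a i + l)) = c)
    (hslack : c ≤ ∑ i, Real.sqrt (b i / a i)) :
    ∀ x : Fin n → ℝ, (∀ i, 0 < x i) → (∑ i, x i) ≤ c →
      ∑ i, (a i * Real.sqrt (b i / (a i + l)) + b i / Real.sqrt (b i / (a i + l)))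
        ≤ ∑ i, (a i * x i + b i / x i) := by
  intro x hx hxc
  set y : Fin n → ℝ := fun i => Real.sqrt (b i / (a i + l)) with hy
  have hA : ∀ i, 0 < a i + l := fun i => by linarith [ha i]
  have hypos : ∀ i, 0 < y i := fun i =>
    Real.sqrt_pos.mpr (div_pos (hb i) (hA i))
  -- AM-GM lower bound
  have key : ∀ i, ∀ z : ℝ, 0 < z →
      2 * Real.sqrt ((a i + l) * b i) ≤ (a i + l) * z + b i / z := by
    intro i z hz
    have h1 : Real.sqrt ((a i + l) * b i) =
        Real.sqrt (a i + l) * Real.sqrt (b i) := Real.sqrt_mul (hA i).le _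
    have hsa : Real.sqrt (a i + l) ^ 2 = a i + l := Real.sq_sqrt (hA i).le
    have hsb : Real.sqrt (b i) ^ 2 = b i := Real.sq_sqrt (hb i).le
    have h2 : 2 * (Real.sqrt (a i + l) * Real.sqrt (b i)) * z
        ≤ (a i + l) * z ^ 2 + b i := by
      nlinarith [sq_nonneg (Real.sqrt (a i + l) * z - Real.sqrt (b i))]
    have h3 : (a i + l) * z + b i / z = ((a i + l) * z ^ 2 + b i) / z := by
      field_simp
    rw [h1, h3, le_div_iff₀ hz]
    linarith
  -- equality at y
  have hy2 : ∀ i, y i ^ 2 = b i / (a i + l) := fun i =>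
    Real.sq_sqrt (div_pos (hb i) (hA i)).le
  have hprod : ∀ i, Real.sqrt ((a i + l) * b i) * y i = b i := by
    intro i
    have hAne : a i + l ≠ 0 := (hA i).ne'
    rw [hy]
    rw [← Real.sqrt_mul (mul_pos (hA i) (hb i)).le]
    have : (a i + l) * b i * (b i / (a i + l)) = b i ^ 2 := by
      field_simp
    rw [this, Real.sqrt_sq (hb i).le]
  have eqy : ∀ i, (a i + l) * y i + b i / y i = 2 * Real.sqrt ((a i + l) * b i) := by
    intro i
    have hyne : y i ≠ 0 := (hypos i).ne'
    have hAne : a i + l ≠ 0 := (hA i).ne'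
    apply mul_right_cancel₀ hyne
    have hsq : y i * y i = b i / (a i + l) := by
      rw [← sq]; exact hy2 i
    have h4 : (a i + l) * y i * y i = b i := by
      rw [mul_assoc, hsq]; field_simp
    field_simp
    linarith [hprod i, h4]
  have e1 : ∑ i, (a i * y i + b i / y i)
      = (∑ i, 2 * Real.sqrt ((a i + l) * b i)) - l * c := by
    rw [← hsol, Finset.mul_sum, ← Finset.sum_sub_distrib]
    exact Finset.sum_congr rfl fun i _ => by rw [← eqy i]; ring
  have e2 : ∑ i, (a i * x i + b i / x i)
      = (∑ i, ((a i + l) * x i + b i / x i)) - l * ∑ i, x i := by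
    rw [Finset.mul_sum, ← Finset.sum_sub_distrib]
    exact Finset.sum_congr rfl fun i _ => by ring
  have hkey : (∑ i, 2 * Real.sqrt ((a i + l) * b i))
      ≤ ∑ i, ((a i + l) * x i + b i / x i) :=
    Finset.sum_le_sum fun i _ => key i (x i) (hx i)
  have hlc : l * ∑ i, x i ≤ l * c := mul_le_mul_of_nonneg_left hxc hl
  rw [e1, e2]
  linarith
end

section
/- The continuous function J: [0,c] → ℝ defined by J(T) = a·T + Σ_{i: T < T̄_i} j_i·(1−ρ_i) + Σ_{i: T ≥ T̄_i} j_i·Δ_i/T + L (with J(0) interpreted by its right limit a·0 + Σ_i j_i·(1−ρ_i) + L) attains its minimum on [0,c], and the minimum is attained at some point of the finite set C ∪ C*, where C = {T̄_i : T̄_i < c} ∪ {0, c} and C* consists of interior stationary points c_k* = √((Σ_{i: T̄_i < c_{k+1}} j_i·Δ_i)/a) lying in (c_k, c_{k+1}). -/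
open Finset in
/-- The piecewise cost
`J(T) = a·T + Σ_{i:T<T̄_i} j_i(1−ρ_i) + Σ_{i:T≥T̄_i} j_iΔ_i/T + L`
attains its minimum on `[0,c]`, and the minimum is attained at `0`, at `c`, at
some threshold `T̄_i < c`, or at an interior stationary point
`T = √((Σ_{i:T̄_i≤T} j_iΔ_i)/a)`. -/
theorem stmt11 (n : ℕ) (j Δ ρ : Fin n → ℝ) (a L c : ℝ)
    (hj : ∀ i, 0 < j i) (hΔ : ∀ i, 0 < Δ i)
    (hρ0 : ∀ i, 0 ≤ ρ i) (hρ1 : ∀ i, ρ i < 1)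
    (ha : 0 < a) (hc : 0 < c)
    (Tbar : Fin n → ℝ) (hTbar : ∀ i, Tbar i = Δ i / (1 - ρ i))
    (J : ℝ → ℝ)
    (hJ : ∀ T, J T =
      a * T + (∑ i, if T < Tbar i then j i * (1 - ρ i) else j i * Δ i / T) + L) :
    ∃ T ∈ Set.Icc (0 : ℝ) c,
      (∀ T' ∈ Set.Icc (0 : ℝ) c, J T ≤ J T') ∧
      (T = 0 ∨ T = c ∨ (∃ i, T = Tbar i ∧ Tbar i < c) ∨
        (0 < T ∧ T < c ∧
          T = Real.sqrt ((∑ i, if Tbar i ≤ T then j i * Δ i else 0) / a))) := by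
  have hTpos : ∀ i, 0 < Tbar i := by
    intro i
    rw [hTbar i]
    exact div_pos (hΔ i) (by linarith [hρ1 i])
  -- Rewrite J in a manifestly continuous form
  have hJ' : ∀ T, J T = a * T + (∑ i, j i * Δ i / max T (Tbar i)) + L := by
    intro T
    rw [hJ T]
    congr 2
    apply Finset.sum_congr rfl
    intro i _
    by_cases h : T < Tbar i
    · rw [if_pos h, max_eq_right h.le, hTbar i]
      have h1 : (0:ℝ) < 1 - ρ i := by linarith [hρ1 i]
      have h2 : Δ i ≠ 0 := ne_of_gt (hΔ i)
      field_simp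
    · rw [if_neg h, max_eq_left (not_lt.1 h)]
  have hJfun : J = fun T => a * T + (∑ i, j i * Δ i / max T (Tbar i)) + L :=
    funext hJ'
  have hcont : Continuous J := by
    rw [hJfun]
    refine ((continuous_const.mul continuous_id).add ?_).add continuous_const
    refine continuous_finset_sum _ fun i _ => ?_
    exact continuous_const.div (continuous_id.max continuous_const)
      (fun T => ne_of_gt (lt_of_lt_of_le (hTpos i) (le_max_right T (Tbar i))))
  obtain ⟨T₀, hT₀mem, hmin⟩ :=
    isCompact_Icc.exists_isMinOn (Set.nonempty_Icc.2 hc.le) hcont.continuousOn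
  refine ⟨T₀, hT₀mem, fun T' hT' => hmin hT', ?_⟩
  by_cases h0 : T₀ = 0
  · exact Or.inl h0
  by_cases hcc : T₀ = c
  · exact Or.inr (Or.inl hcc)
  have hT₀pos : 0 < T₀ := lt_of_le_of_ne hT₀mem.1 (Ne.symm h0)
  have hT₀lt : T₀ < c := lt_of_le_of_ne hT₀mem.2 hcc
  by_cases hth : ∃ i, T₀ = Tbar i
  · obtain ⟨i, hi⟩ := hth
    exact Or.inr (Or.inr (Or.inl ⟨i, hi, hi ▸ hT₀lt⟩))
  push_neg at hth
  refine Or.inr (Or.inr (Or.inr ⟨hT₀pos, hT₀lt, ?_⟩))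
  set S : ℝ := ∑ i, if Tbar i ≤ T₀ then j i * Δ i else 0 with hS
  set K : ℝ := (∑ i, if Tbar i ≤ T₀ then 0 else j i * Δ i / Tbar i) + L with hK
  -- Eventual equality with a smooth model
  have hev : J =ᶠ[nhds T₀] fun T => a * T + S / T + K := by
    have h1 : ∀ i : Fin n, ∀ᶠ T in nhds T₀,
        (Tbar i ≤ T₀ → Tbar i < T) ∧ (¬ Tbar i ≤ T₀ → T < Tbar i) := by
      intro i
      by_cases hi : Tbar i ≤ T₀
      · have : Tbar i < T₀ := lt_of_le_of_ne hi (fun h => hth i h.symm)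
        filter_upwards [eventually_gt_nhds this] with T hT
        exact ⟨fun _ => hT, fun h => absurd hi h⟩
      · have : T₀ < Tbar i := lt_of_not_ge hi
        filter_upwards [eventually_lt_nhds this] with T hT
        exact ⟨fun h => absurd h hi, fun _ => hT⟩
    have hall : ∀ᶠ T in nhds T₀, ∀ i : Fin n,
        (Tbar i ≤ T₀ → Tbar i < T) ∧ (¬ Tbar i ≤ T₀ → T < Tbar i) :=
      Filter.eventually_all.2 h1
    filter_upwards [hall, eventually_gt_nhds hT₀pos] with T hT hTpos'
    rw [hJ' T, hS, hK]
    have : (∑ i, j i * Δ i / max T (Tbar i))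
        = (∑ i, if Tbar i ≤ T₀ then j i * Δ i else 0) / T
          + ∑ i, if Tbar i ≤ T₀ then 0 else j i * Δ i / Tbar i := by
      rw [Finset.sum_div, ← Finset.sum_add_distrib]
      apply Finset.sum_congr rfl
      intro i _
      by_cases hi : Tbar i ≤ T₀
      · rw [if_pos hi, if_pos hi, max_eq_left ((hT i).1 hi).le]
        ring
      · rw [if_neg hi, if_neg hi, max_eq_right ((hT i).2 hi).le]
        ring
    rw [this]; ring
  -- Derivative of the model at T₀
  have hTne : T₀ ≠ 0 := ne_of_gt hT₀pos
  have hderiv : HasDerivAt (fun T => a * T + S / T + K) (a - S / T₀ ^ 2) T₀ := by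
    have h1 : HasDerivAt (fun T : ℝ => a * T) a T₀ := by
      simpa using (hasDerivAt_id T₀).const_mul a
    have h2 : HasDerivAt (fun T : ℝ => S / T) (S * (-(T₀ ^ 2)⁻¹)) T₀ := by
      simpa [div_eq_mul_inv] using (hasDerivAt_inv hTne).const_mul S
    have := (h1.add h2).add_const K
    refine this.congr_deriv ?_
    ring
  have hJd : HasDerivAt J (a - S / T₀ ^ 2) T₀ :=
    hderiv.congr_of_eventuallyEq hev
  have hloc : IsLocalMin J T₀ :=
    hmin.isLocalMin (Icc_mem_nhds hT₀pos hT₀lt)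
  have hzero : a - S / T₀ ^ 2 = 0 := hloc.hasDerivAt_eq_zero hJd
  have hSa : S / a = T₀ ^ 2 := by
    have hT2 : T₀ ^ 2 ≠ 0 := pow_ne_zero 2 hTne
    field_simp at hzero ⊢
    linarith [hzero]
  rw [hSa, Real.sqrt_sq hT₀pos.le]
end

section
/- In Case (1a), where m̄_i·s_i ≥ m̄_{i-1}·s_{i-1} and (m̄_i+1)·s_i ≥ (m̄_{i-1}+1)·s_{i-1}, the maximum queue size of function F_i under the common-period schedule is q_max = T·max{ ρ_i·(s_i(1−ρ_i) − s_{i-1}(1−ρ_{i-1})), (1−ρ_{i-1})·(s_{i-1}ρ_{i-1} − s_iρ_i) }. -/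
open MeasureTheory Set intervalIntegral

open Classical in
/-- Service rate of a function running `m̄` machines always and one extra machine of
speed `s` on during a periodically repeated window `[φ + kT, φ + kT + ρT)`. -/
noncomputable def onRate12 (T φ mbar ρ s t : ℝ) : ℝ :=
  if ∃ k : ℤ, φ + k * T ≤ t ∧ t < φ + k * T + ρ * T then (mbar + 1) * s else mbar * s

/-- Fluid queue trajectory of `F_i`: initial content `q0` plus the integral of
(input rate from `F_{i-1}`) minus (service rate of `F_i`). -/
noncomputable def qTraj12 (T φ0 m0 ρ0 s0 φ1 m1 ρ1 s1 q0 t : ℝ) : ℝ :=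
  q0 + ∫ x in (0 : ℝ)..t, (onRate12 T φ0 m0 ρ0 s0 x - onRate12 T φ1 m1 ρ1 s1 x)

open Classical in
lemma onRate12_meas (T φ m ρ s : ℝ) : Measurable (onRate12 T φ m ρ s) := by
  have hs : MeasurableSet {t : ℝ | ∃ k : ℤ, φ + k * T ≤ t ∧ t < φ + k * T + ρ * T} := by
    have : {t : ℝ | ∃ k : ℤ, φ + k * T ≤ t ∧ t < φ + k * T + ρ * T}
        = ⋃ k : ℤ, Ico (φ + k * T) (φ + k * T + ρ * T) := by
      ext t; simp [Set.mem_iUnion, Set.mem_Ico]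
    rw [this]
    exact MeasurableSet.iUnion fun k => measurableSet_Ico
  exact Measurable.ite hs measurable_const measurable_const

lemma onRate12_intInt (T φ m ρ s a b : ℝ) :
    IntervalIntegrable (onRate12 T φ m ρ s) volume a b := by
  rw [intervalIntegrable_iff]
  apply Measure.integrableOn_of_bounded (M := |m * s| + |(m + 1) * s|)
  · rw [Set.uIoc]; exact measure_Ioc_lt_top.ne
  · exact (onRate12_meas T φ m ρ s).aestronglyMeasurable
  · apply Filter.Eventually.of_forall
    intro x
    rw [Real.norm_eq_abs]
    unfold onRate12
    split
    · linarith [abs_nonneg (m * s)]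
    · linarith [abs_nonneg ((m + 1) * s)]

lemma onRate12_on {T φ m ρ s t : ℝ} (k : ℤ) (h1 : φ + k * T ≤ t)
    (h2 : t < φ + k * T + ρ * T) : onRate12 T φ m ρ s t = (m + 1) * s := by
  unfold onRate12
  exact if_pos ⟨k, h1, h2⟩

lemma onRate12_off {T φ m ρ s t : ℝ} (hT : 0 < T) (k₀ : ℤ)
    (h1 : φ + k₀ * T + ρ * T ≤ t) (h2 : t < φ + (k₀ + 1 : ℤ) * T) :
    onRate12 T φ m ρ s t = m * s := by
  unfold onRate12
  apply if_neg
  rintro ⟨k, hk1, hk2⟩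
  have hk : k ≤ k₀ := by
    by_contra h
    push_neg at h
    have h' : ((k₀ + 1 : ℤ) : ℝ) ≤ (k : ℝ) := by exact_mod_cast h
    nlinarith
  have h' : (k : ℝ) ≤ (k₀ : ℝ) := by exact_mod_cast hk
  nlinarith

lemma onRate12_periodic (T φ m ρ s : ℝ) : Function.Periodic (onRate12 T φ m ρ s) T := by
  intro t
  unfold onRate12
  have h : (∃ k : ℤ, φ + k * T ≤ t + T ∧ t + T < φ + k * T + ρ * T) ↔
      (∃ k : ℤ, φ + k * T ≤ t ∧ t < φ + k * T + ρ * T) := by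
    constructor
    · rintro ⟨k, h1, h2⟩
      exact ⟨k - 1, by push_cast; linarith, by push_cast; linarith⟩
    · rintro ⟨k, h1, h2⟩
      exact ⟨k + 1, by push_cast; linarith, by push_cast; linarith⟩
  classical
  exact if_congr h rfl rfl

lemma onRate12_le {T φ m ρ s t : ℝ} (hs : 0 ≤ s) : onRate12 T φ m ρ s t ≤ (m + 1) * s := by
  unfold onRate12; split <;> nlinarith

lemma onRate12_ge {T φ m ρ s t : ℝ} (hs : 0 ≤ s) : m * s ≤ onRate12 T φ m ρ s t := by
  unfold onRate12; split <;> nlinarith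

lemma integral_const_on12 {f : ℝ → ℝ} {a b c : ℝ} (hab : a ≤ b)
    (h : ∀ t ∈ Set.Ioo a b, f t = c) :
    ∫ x in a..b, f x = c * (b - a) := by
  rw [intervalIntegral.integral_of_le hab, MeasureTheory.integral_Ioc_eq_integral_Ioo,
    MeasureTheory.setIntegral_congr_fun measurableSet_Ioo h,
    MeasureTheory.setIntegral_const, Real.volume_real_Ioo,
    max_eq_left (by linarith), smul_eq_mul]
  ring

/-- Net drift of the queue. -/
noncomputable def dq12 (T φ0 m0 ρ0 s0 φ1 m1 ρ1 s1 : ℝ) : ℝ → ℝ :=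
  fun x => onRate12 T φ0 m0 ρ0 s0 x - onRate12 T φ1 m1 ρ1 s1 x

lemma dq12_intInt (T φ0 m0 ρ0 s0 φ1 m1 ρ1 s1 a b : ℝ) :
    IntervalIntegrable (dq12 T φ0 m0 ρ0 s0 φ1 m1 ρ1 s1) volume a b :=
  (onRate12_intInt T φ0 m0 ρ0 s0 a b).sub (onRate12_intInt T φ1 m1 ρ1 s1 a b)

lemma dq12_periodic (T φ0 m0 ρ0 s0 φ1 m1 ρ1 s1 : ℝ) :
    Function.Periodic (dq12 T φ0 m0 ρ0 s0 φ1 m1 ρ1 s1) T := by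
  intro t
  unfold dq12
  rw [onRate12_periodic T φ0 m0 ρ0 s0 t, onRate12_periodic T φ1 m1 ρ1 s1 t]

lemma qTraj12_eq_int (T φ0 m0 ρ0 s0 φ1 m1 ρ1 s1 q0 t : ℝ) :
    qTraj12 T φ0 m0 ρ0 s0 φ1 m1 ρ1 s1 q0 t
      = q0 + ∫ x in (0:ℝ)..t, dq12 T φ0 m0 ρ0 s0 φ1 m1 ρ1 s1 x := rfl

lemma qTraj12_sub (T φ0 m0 ρ0 s0 φ1 m1 ρ1 s1 q0 a b : ℝ) :
    qTraj12 T φ0 m0 ρ0 s0 φ1 m1 ρ1 s1 q0 b - qTraj12 T φ0 m0 ρ0 s0 φ1 m1 ρ1 s1 q0 a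
      = ∫ x in a..b, dq12 T φ0 m0 ρ0 s0 φ1 m1 ρ1 s1 x := by
  rw [qTraj12_eq_int, qTraj12_eq_int,
    ← intervalIntegral.integral_add_adjacent_intervals
      (dq12_intInt T φ0 m0 ρ0 s0 φ1 m1 ρ1 s1 0 a) (dq12_intInt T φ0 m0 ρ0 s0 φ1 m1 ρ1 s1 a b)]
  ring

set_option maxHeartbeats 1600000 in
/-- Case (1a) (`m̄_i s_i ≥ m̄_{i-1} s_{i-1}` and `(m̄_i+1)s_i ≥ (m̄_{i-1}+1)s_{i-1}`):
placing the on-window of `F_i` so that the queue stays nonnegative and its maximum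
is minimized, the maximum queue size equals
`T·max{ρ_i(s_i(1−ρ_i) − s_{i-1}(1−ρ_{i-1})), (1−ρ_{i-1})(s_{i-1}ρ_{i-1} − s_iρ_i)}`. -/
theorem stmt12 (r s0 s1 T φ0 m0 m1 ρ0 ρ1 : ℝ)
    (hr : 0 < r) (hs0 : 0 < s0) (hs1 : 0 < s1) (hT : 0 < T)
    (hm0 : m0 = (⌊r / s0⌋ : ℤ)) (hρ0 : ρ0 = r / s0 - m0)
    (hm1 : m1 = (⌊r / s1⌋ : ℤ)) (hρ1 : ρ1 = r / s1 - m1)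
    (hcase1 : m0 * s0 ≤ m1 * s1) (hcase2 : (m0 + 1) * s0 ≤ (m1 + 1) * s1) :
    ∃ φ1 q0 : ℝ,
      (∀ t ∈ Set.Ici (0 : ℝ), 0 ≤ qTraj12 T φ0 m0 ρ0 s0 φ1 m1 ρ1 s1 q0 t) ∧
      IsLUB ((fun t => qTraj12 T φ0 m0 ρ0 s0 φ1 m1 ρ1 s1 q0 t) '' Set.Ici (0 : ℝ))
        (T * max (ρ1 * (s1 * (1 - ρ1) - s0 * (1 - ρ0)))
                 ((1 - ρ0) * (s0 * ρ0 - s1 * ρ1))) ∧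
      (∀ φ1' q0' : ℝ,
        (∀ t ∈ Set.Ici (0 : ℝ), 0 ≤ qTraj12 T φ0 m0 ρ0 s0 φ1' m1 ρ1 s1 q0' t) →
        ∀ M : ℝ,
          IsLUB ((fun t => qTraj12 T φ0 m0 ρ0 s0 φ1' m1 ρ1 s1 q0' t) ''
            Set.Ici (0 : ℝ)) M →
          T * max (ρ1 * (s1 * (1 - ρ1) - s0 * (1 - ρ0)))
                  ((1 - ρ0) * (s0 * ρ0 - s1 * ρ1)) ≤ M) := by
  -- basic range facts on ρ0, ρ1
  have hρ0f : ρ0 = Int.fract (r / s0) := by rw [hρ0, hm0, Int.self_sub_floor]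
  have hρ1f : ρ1 = Int.fract (r / s1) := by rw [hρ1, hm1, Int.self_sub_floor]
  have hρ00 : 0 ≤ ρ0 := hρ0f ▸ Int.fract_nonneg _
  have hρ01 : ρ0 < 1 := hρ0f ▸ Int.fract_lt_one _
  have hρ10 : 0 ≤ ρ1 := hρ1f ▸ Int.fract_nonneg _
  have hρ11 : ρ1 < 1 := hρ1f ▸ Int.fract_lt_one _
  have hρ1T : 0 ≤ ρ1 * T := mul_nonneg hρ10 hT.le
  have hρ0T : 0 ≤ ρ0 * T := mul_nonneg hρ00 hT.le
  have hρ0T1 : ρ0 * T ≤ T := by nlinarith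
  have hm0s : (m0 : ℝ) * s0 = r - ρ0 * s0 := by
    have h : (m0 : ℝ) = r / s0 - ρ0 := by linarith [hρ0]
    rw [h, sub_mul, div_mul_cancel₀ r hs0.ne']
  have hm1s : (m1 : ℝ) * s1 = r - ρ1 * s1 := by
    have h : (m1 : ℝ) = r / s1 - ρ1 := by linarith [hρ1]
    rw [h, sub_mul, div_mul_cancel₀ r hs1.ne']
  set A : ℝ := (m0 + 1) * s0 - m1 * s1 with hAd
  set B : ℝ := (m0 + 1) * s0 - (m1 + 1) * s1 with hBd
  set C : ℝ := m0 * s0 - m1 * s1 with hCd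
  have hAe : A = s0 * (1 - ρ0) + s1 * ρ1 := by rw [hAd]; linear_combination hm0s - hm1s
  have hBe : B = s0 * (1 - ρ0) - s1 * (1 - ρ1) := by rw [hBd]; linear_combination hm0s - hm1s
  have hCe : C = s1 * ρ1 - s0 * ρ0 := by rw [hCd]; linear_combination hm0s - hm1s
  have hA : 0 < A := by rw [hAe]; nlinarith
  have hB : B ≤ 0 := by rw [hBd]; linarith
  have hC : C ≤ 0 := by rw [hCd]; linarith
  set X : ℝ := -(B * ρ1 * T) / A with hXd
  have hAX : A * X = -(B * ρ1 * T) := by rw [hXd]; field_simp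
  have hX0 : 0 ≤ X := by
    apply div_nonneg _ hA.le
    nlinarith
  have hsum : A * (ρ0 - ρ1) + B * ρ1 + C * (1 - ρ0) = 0 := by
    rw [hAe, hBe, hCe]; ring
  have h3 : A * (ρ0 * T - X - ρ1 * T) = -C * (1 - ρ0) * T := by
    linear_combination T * hsum - hAX
  have hX1 : X + ρ1 * T ≤ ρ0 * T := by
    by_contra hcon
    push_neg at hcon
    have h5 : 0 < A * (X + ρ1 * T - ρ0 * T) := mul_pos hA (by linarith)
    nlinarith [h3]
  -- abbreviations
  set φ1 : ℝ := φ0 + X with hφ1d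
  set dq : ℝ → ℝ := dq12 T φ0 m0 ρ0 s0 φ1 m1 ρ1 s1 with hdqd
  have hint : ∀ a b : ℝ, IntervalIntegrable dq volume a b := fun a b =>
    dq12_intInt T φ0 m0 ρ0 s0 φ1 m1 ρ1 s1 a b
  -- pointwise values of dq on the four pieces of the canonical period
  have hE1 : ∀ t ∈ Set.Ioo φ0 (φ0 + X), dq t = A := by
    rintro t ⟨ht1, ht2⟩
    have e0 : onRate12 T φ0 m0 ρ0 s0 t = (m0 + 1) * s0 :=
      onRate12_on 0 (by push_cast; linarith) (by push_cast; linarith)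
    have e1 : onRate12 T φ1 m1 ρ1 s1 t = m1 * s1 :=
      onRate12_off hT (-1) (by push_cast; linarith) (by push_cast; linarith)
    show onRate12 T φ0 m0 ρ0 s0 t - onRate12 T φ1 m1 ρ1 s1 t = A
    rw [e0, e1, hAd]
  have hE2 : ∀ t ∈ Set.Ioo (φ0 + X) (φ0 + X + ρ1 * T), dq t = B := by
    rintro t ⟨ht1, ht2⟩
    have e0 : onRate12 T φ0 m0 ρ0 s0 t = (m0 + 1) * s0 :=
      onRate12_on 0 (by push_cast; linarith) (by push_cast; linarith)
    have e1 : onRate12 T φ1 m1 ρ1 s1 t = (m1 + 1) * s1 :=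
      onRate12_on 0 (by push_cast; rw [hφ1d]; linarith) (by push_cast; rw [hφ1d]; linarith)
    show onRate12 T φ0 m0 ρ0 s0 t - onRate12 T φ1 m1 ρ1 s1 t = B
    rw [e0, e1, hBd]
  have hE3 : ∀ t ∈ Set.Ioo (φ0 + X + ρ1 * T) (φ0 + ρ0 * T), dq t = A := by
    rintro t ⟨ht1, ht2⟩
    have e0 : onRate12 T φ0 m0 ρ0 s0 t = (m0 + 1) * s0 :=
      onRate12_on 0 (by push_cast; linarith) (by push_cast; linarith)
    have e1 : onRate12 T φ1 m1 ρ1 s1 t = m1 * s1 :=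
      onRate12_off hT 0 (by push_cast; rw [hφ1d]; linarith) (by push_cast; rw [hφ1d]; linarith)
    show onRate12 T φ0 m0 ρ0 s0 t - onRate12 T φ1 m1 ρ1 s1 t = A
    rw [e0, e1, hAd]
  have hE4 : ∀ t ∈ Set.Ioo (φ0 + ρ0 * T) (φ0 + T), dq t = C := by
    rintro t ⟨ht1, ht2⟩
    have e0 : onRate12 T φ0 m0 ρ0 s0 t = m0 * s0 :=
      onRate12_off hT 0 (by push_cast; linarith) (by push_cast; linarith)
    have e1 : onRate12 T φ1 m1 ρ1 s1 t = m1 * s1 :=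
      onRate12_off hT 0 (by push_cast; rw [hφ1d]; linarith) (by push_cast; rw [hφ1d]; linarith)
    show onRate12 T φ0 m0 ρ0 s0 t - onRate12 T φ1 m1 ρ1 s1 t = C
    rw [e0, e1, hCd]
  -- integral values on the pieces
  have J1 : ∀ u : ℝ, 0 ≤ u → u ≤ X → (∫ x in φ0..(φ0 + u), dq x) = A * u := by
    intro u h0 h1
    rw [integral_const_on12 (by linarith)
      (fun t ht => hE1 t ⟨ht.1, by linarith [ht.2]⟩)]
    ring
  have J2 : ∀ u : ℝ, X ≤ u → u ≤ X + ρ1 * T →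
      (∫ x in φ0..(φ0 + u), dq x) = A * X + B * (u - X) := by
    intro u h0 h1
    rw [← intervalIntegral.integral_add_adjacent_intervals (hint φ0 (φ0 + X))
      (hint (φ0 + X) (φ0 + u)), J1 X hX0 le_rfl,
      integral_const_on12 (by linarith)
        (fun t ht => hE2 t ⟨ht.1, by linarith [ht.2]⟩)]
    ring
  have J3 : ∀ u : ℝ, X + ρ1 * T ≤ u → u ≤ ρ0 * T →
      (∫ x in φ0..(φ0 + u), dq x) = A * X + B * (ρ1 * T) + A * (u - X - ρ1 * T) := by
    intro u h0 h1
    rw [← intervalIntegral.integral_add_adjacent_intervals (hint φ0 (φ0 + (X + ρ1 * T)))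
      (hint (φ0 + (X + ρ1 * T)) (φ0 + u)), J2 (X + ρ1 * T) (by linarith) le_rfl]
    have : (∫ x in (φ0 + (X + ρ1 * T))..(φ0 + u), dq x) = A * (u - X - ρ1 * T) := by
      rw [integral_const_on12 (by linarith)
        (fun t ht => hE3 t ⟨by linarith [ht.1], by linarith [ht.2]⟩)]
      ring
    rw [this]
    ring
  have J4 : ∀ u : ℝ, ρ0 * T ≤ u → u ≤ T →
      (∫ x in φ0..(φ0 + u), dq x)
        = A * X + B * (ρ1 * T) + A * (ρ0 * T - X - ρ1 * T) + C * (u - ρ0 * T) := by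
    intro u h0 h1
    rw [← intervalIntegral.integral_add_adjacent_intervals (hint φ0 (φ0 + ρ0 * T))
      (hint (φ0 + ρ0 * T) (φ0 + u)), J3 (ρ0 * T) hX1 le_rfl]
    have : (∫ x in (φ0 + ρ0 * T)..(φ0 + u), dq x) = C * (u - ρ0 * T) := by
      rw [integral_const_on12 (by linarith)
        (fun t ht => hE4 t ⟨ht.1, by linarith [ht.2]⟩)]
      ring
    rw [this]
  -- the trajectory function
  set Mx : ℝ := max (A * X) (A * (ρ0 * T - X - ρ1 * T)) with hMxd
  have hbound : ∀ u : ℝ, 0 ≤ u → u ≤ T →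
      0 ≤ (∫ x in φ0..(φ0 + u), dq x) ∧ (∫ x in φ0..(φ0 + u), dq x) ≤ Mx := by
    intro u h0 h1
    have hle1 : A * X ≤ Mx := le_max_left _ _
    have hle2 : A * (ρ0 * T - X - ρ1 * T) ≤ Mx := le_max_right _ _
    rcases le_or_gt u X with hu | hu
    · rw [J1 u h0 hu]
      constructor
      · exact mul_nonneg hA.le h0
      · nlinarith
    rcases le_or_gt u (X + ρ1 * T) with hu2 | hu2
    · rw [J2 u hu.le hu2]
      constructor
      · nlinarith [mul_nonneg (neg_nonneg.2 hB) (by linarith : (0:ℝ) ≤ X + ρ1 * T - u)]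
      · nlinarith [mul_nonneg (neg_nonneg.2 hB) (by linarith : (0:ℝ) ≤ u - X)]
    rcases le_or_gt u (ρ0 * T) with hu3 | hu3
    · rw [J3 u hu2.le hu3]
      constructor
      · nlinarith [mul_nonneg hA.le (by linarith : (0:ℝ) ≤ u - X - ρ1 * T)]
      · nlinarith [mul_nonneg hA.le (by linarith : (0:ℝ) ≤ ρ0 * T - u)]
    · rw [J4 u hu3.le h1]
      constructor
      · nlinarith [mul_nonneg (neg_nonneg.2 hC) (by linarith : (0:ℝ) ≤ T - u)]
      · nlinarith [mul_nonneg (neg_nonneg.2 hC) (by linarith : (0:ℝ) ≤ u - ρ0 * T)]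
  have hGT0 : (∫ x in φ0..(φ0 + T), dq x) = 0 := by
    rw [J4 T hρ0T1 le_rfl]
    linear_combination hAX + h3
  -- Q and its periodicity
  set Q : ℝ → ℝ := fun t => ∫ x in φ0..t, dq x with hQd
  have hQper : Function.Periodic Q T := by
    intro t
    have h1 : (∫ x in t..(t + T), dq x) = ∫ x in φ0..(φ0 + T), dq x :=
      (dq12_periodic T φ0 m0 ρ0 s0 φ1 m1 ρ1 s1).intervalIntegral_add_eq t φ0
    have h2 := intervalIntegral.integral_add_adjacent_intervals (hint φ0 t) (hint t (t + T))
    show (∫ x in φ0..(t + T), dq x) = ∫ x in φ0..t, dq x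
    rw [← h2, h1, hGT0, add_zero]
  have hQall : ∀ t : ℝ, 0 ≤ Q t ∧ Q t ≤ Mx := by
    intro t
    have hu0 := Int.sub_floor_div_mul_nonneg (t - φ0) hT
    have hu1 := Int.sub_floor_div_mul_lt (t - φ0) hT
    have heq : Q (φ0 + ((t - φ0) - (⌊(t - φ0) / T⌋ : ℤ) * T)) = Q t := by
      have h : φ0 + ((t - φ0) - (⌊(t - φ0) / T⌋ : ℤ) * T) = t - (⌊(t - φ0) / T⌋ : ℤ) * T := by
        ring
      rw [h]
      exact hQper.sub_int_mul_eq _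
    rw [← heq]
    exact hbound _ hu0 hu1.le
  have hshift : ∀ x : ℝ, ∃ t₀ : ℝ, 0 ≤ t₀ ∧ Q t₀ = Q x := by
    intro x
    refine ⟨x + (⌈(-x) / T⌉ : ℤ) * T, ?_, ?_⟩
    · have h := Int.le_ceil ((-x) / T)
      rw [div_le_iff₀ hT] at h
      linarith
    · have h : x + ((⌈(-x) / T⌉ : ℤ) : ℝ) * T = x - ((-⌈(-x) / T⌉ : ℤ) : ℝ) * T := by
        push_cast; ring
      rw [h]
      exact hQper.sub_int_mul_eq _
  -- choose q0 so that the trajectory equals Q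
  set q0v : ℝ := -(∫ x in (0:ℝ)..φ0, dq x) with hq0d
  have hq : ∀ t : ℝ, qTraj12 T φ0 m0 ρ0 s0 φ1 m1 ρ1 s1 q0v t = Q t := by
    intro t
    rw [qTraj12_eq_int]
    show q0v + (∫ x in (0:ℝ)..t, dq x) = ∫ x in φ0..t, dq x
    rw [← intervalIntegral.integral_add_adjacent_intervals (hint 0 φ0) (hint φ0 t), hq0d]
    ring
  -- the claimed maximum value
  have hMt : T * max (ρ1 * (s1 * (1 - ρ1) - s0 * (1 - ρ0)))
      ((1 - ρ0) * (s0 * ρ0 - s1 * ρ1)) = Mx := by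
    rw [hMxd, mul_max_of_nonneg _ _ hT.le]
    congr 1
    · linear_combination (ρ1 * T) * hBe - hAX
    · linear_combination ((1 - ρ0) * T) * hCe - h3
  have hvX : Q (φ0 + X) = A * X := J1 X hX0 le_rfl
  have hvP : Q (φ0 + ρ0 * T) = A * (ρ0 * T - X - ρ1 * T) := by
    show (∫ x in φ0..(φ0 + ρ0 * T), dq x) = _
    rw [J3 (ρ0 * T) hX1 le_rfl]
    linear_combination hAX
  refine ⟨φ1, q0v, ?_, ?_, ?_⟩
  · intro t _
    rw [hq t]
    exact (hQall t).1
  · rw [hMt]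
    constructor
    · rintro y ⟨t, _, rfl⟩
      simp only
      rw [hq t]
      exact (hQall t).2
    · intro ub hub
      rcases le_total (A * X) (A * (ρ0 * T - X - ρ1 * T)) with hmx | hmx
      · obtain ⟨t₀, ht₀, he⟩ := hshift (φ0 + ρ0 * T)
        have hmem : qTraj12 T φ0 m0 ρ0 s0 φ1 m1 ρ1 s1 q0v t₀ ≤ ub :=
          hub ⟨t₀, ht₀, rfl⟩
        rw [hq t₀, he, hvP] at hmem
        rw [hMxd, max_eq_right hmx]
        exact hmem
      · obtain ⟨t₀, ht₀, he⟩ := hshift (φ0 + X)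
        have hmem : qTraj12 T φ0 m0 ρ0 s0 φ1 m1 ρ1 s1 q0v t₀ ≤ ub :=
          hub ⟨t₀, ht₀, rfl⟩
        rw [hq t₀, he, hvX] at hmem
        rw [hMxd, max_eq_left hmx]
        exact hmem
  -- minimality
  · intro φ1' q0' hnn M hlub
    have hub := hlub.1
    set dq' : ℝ → ℝ := dq12 T φ0 m0 ρ0 s0 φ1' m1 ρ1 s1 with hdq'd
    have hint' : ∀ a b : ℝ, IntervalIntegrable dq' volume a b := fun a b =>
      dq12_intInt T φ0 m0 ρ0 s0 φ1' m1 ρ1 s1 a b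
    have hIoo : ∀ a b : ℝ, a ≤ b → IntegrableOn dq' (Set.Ioo a b) volume := by
      intro a b hab
      exact (hint' a b).1.mono_set Set.Ioo_subset_Ioc_self
    have key : ∀ (a b c : ℝ), a ≤ b → (∀ x ∈ Set.Ioo a b, dq' x ≤ c) →
        (∫ x in a..b, dq' x) ≤ c * (b - a) := by
      intro a b c hab hc
      rw [intervalIntegral.integral_of_le hab, MeasureTheory.integral_Ioc_eq_integral_Ioo]
      calc (∫ x in Set.Ioo a b, dq' x)
          ≤ ∫ _x in Set.Ioo a b, c := by
            apply MeasureTheory.setIntegral_mono_on (hIoo a b hab) _ measurableSet_Ioo hc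
            exact integrableOn_const measure_Ioo_lt_top.ne
        _ = c * (b - a) := by
            rw [MeasureTheory.setIntegral_const, Real.volume_real_Ioo,
              max_eq_left (by linarith), smul_eq_mul, mul_comm]
    have claim1 : T * (ρ1 * (s1 * (1 - ρ1) - s0 * (1 - ρ0))) ≤ M := by
      set N : ℤ := ⌈(-φ1') / T⌉ with hNd
      have hτ : 0 ≤ φ1' + (N : ℝ) * T := by
        have h := Int.le_ceil ((-φ1') / T)
        rw [div_le_iff₀ hT] at h
        rw [hNd]
        linarith
      set τ : ℝ := φ1' + (N : ℝ) * T with hτd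
      have hIle : (∫ x in τ..(τ + ρ1 * T), dq' x) ≤ B * (ρ1 * T) := by
        have h := key τ (τ + ρ1 * T) B (by linarith) ?_
        · calc (∫ x in τ..(τ + ρ1 * T), dq' x) ≤ B * (τ + ρ1 * T - τ) := h
            _ = B * (ρ1 * T) := by ring_nf
        · intro x hx
          have e1 : onRate12 T φ1' m1 ρ1 s1 x = (m1 + 1) * s1 :=
            onRate12_on N (by rw [hτd] at hx; linarith [hx.1]) (by rw [hτd] at hx; linarith [hx.2])
          have e0 : onRate12 T φ0 m0 ρ0 s0 x ≤ (m0 + 1) * s0 := onRate12_le hs0.le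
          show onRate12 T φ0 m0 ρ0 s0 x - onRate12 T φ1' m1 ρ1 s1 x ≤ B
          rw [e1, hBd]
          linarith
      have h5 := qTraj12_sub T φ0 m0 ρ0 s0 φ1' m1 ρ1 s1 q0' τ (τ + ρ1 * T)
      have h6 : 0 ≤ qTraj12 T φ0 m0 ρ0 s0 φ1' m1 ρ1 s1 q0' (τ + ρ1 * T) :=
        hnn _ (by simp only [Set.mem_Ici]; linarith)
      have h7 : qTraj12 T φ0 m0 ρ0 s0 φ1' m1 ρ1 s1 q0' τ ≤ M := hub ⟨τ, hτ, rfl⟩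
      have h8 : -(B * (ρ1 * T)) ≤ M := by linarith
      have h9 : T * (ρ1 * (s1 * (1 - ρ1) - s0 * (1 - ρ0))) = -(B * (ρ1 * T)) := by
        linear_combination (ρ1 * T) * hBe
      linarith
    have claim2 : T * ((1 - ρ0) * (s0 * ρ0 - s1 * ρ1)) ≤ M := by
      set N : ℤ := ⌈(-φ0) / T⌉ with hNd
      have hτ0 : 0 ≤ φ0 + (N : ℝ) * T := by
        have h := Int.le_ceil ((-φ0) / T)
        rw [div_le_iff₀ hT] at h
        rw [hNd]
        linarith
      set τ : ℝ := φ0 + (N : ℝ) * T + ρ0 * T with hτd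
      have hτ : 0 ≤ τ := by rw [hτd]; linarith
      have hIle : (∫ x in τ..(φ0 + (N : ℝ) * T + T), dq' x) ≤ C * (T - ρ0 * T) := by
        have h := key τ (φ0 + (N : ℝ) * T + T) C (by rw [hτd]; linarith) ?_
        · calc (∫ x in τ..(φ0 + (N : ℝ) * T + T), dq' x)
              ≤ C * (φ0 + (N : ℝ) * T + T - τ) := h
            _ = C * (T - ρ0 * T) := by rw [hτd]; ring_nf
        · intro x hx
          have e0 : onRate12 T φ0 m0 ρ0 s0 x = m0 * s0 := by
            apply onRate12_off hT N
            · rw [hτd] at hx; linarith [hx.1]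
            · push_cast
              rw [hτd] at hx
              linarith [hx.2]
          have e1 : m1 * s1 ≤ onRate12 T φ1' m1 ρ1 s1 x := onRate12_ge hs1.le
          show onRate12 T φ0 m0 ρ0 s0 x - onRate12 T φ1' m1 ρ1 s1 x ≤ C
          rw [e0, hCd]
          linarith
      have h5 := qTraj12_sub T φ0 m0 ρ0 s0 φ1' m1 ρ1 s1 q0' τ (φ0 + (N : ℝ) * T + T)
      have h6 : 0 ≤ qTraj12 T φ0 m0 ρ0 s0 φ1' m1 ρ1 s1 q0' (φ0 + (N : ℝ) * T + T) :=
        hnn _ (by simp only [Set.mem_Ici]; linarith)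
      have h7 : qTraj12 T φ0 m0 ρ0 s0 φ1' m1 ρ1 s1 q0' τ ≤ M := hub ⟨τ, hτ, rfl⟩
      have h8 : -(C * (T - ρ0 * T)) ≤ M := by linarith
      have h9 : T * ((1 - ρ0) * (s0 * ρ0 - s1 * ρ1)) = -(C * (T - ρ0 * T)) := by
        linear_combination (T - ρ0 * T) * hCe
      linarith
    rw [mul_max_of_nonneg _ _ hT.le]
    exact max_le claim1 claim2
end

section
/- For any two consecutive functions, the maximum queue size q_max_i = T·α_i with α_i = max{ ρ_i(s_i(1−ρ_i) − s_{i-1}(1−ρ_{i-1})), (1−ρ_{i-1})(s_{i-1}ρ_{i-1} − s_iρ_i), ρ_{i-1}(s_{i-1}(1−ρ_{i-1}) − s_i(1−ρ_i)), (1−ρ_i)(s_iρ_i − s_{i-1}ρ_{i-1}) } is nonnegative and bounded above by T·max{s_{i-1}, s_i}, for all ρ_{i-1}, ρ_i ∈ [0,1) and s_{i-1}, s_i > 0. -/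
/-- The coefficient `α_i` in `q_max_i = T·α_i` (maximum over the four case
expressions) is nonnegative and `q_max_i ≤ T·max{s_{i-1}, s_i}`, for all
`ρ_{i-1}, ρ_i ∈ [0,1)` and speeds `s_{i-1}, s_i > 0`: the maximum queue size is
bounded regardless of the input rate. -/
theorem stmt13 (s0 s1 ρ0 ρ1 T : ℝ) (hs0 : 0 < s0) (hs1 : 0 < s1)
    (hρ00 : 0 ≤ ρ0) (hρ01 : ρ0 < 1) (hρ10 : 0 ≤ ρ1) (hρ11 : ρ1 < 1) (hT : 0 < T) :
    0 ≤ max (max (ρ1 * (s1 * (1 - ρ1) - s0 * (1 - ρ0)))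
                 ((1 - ρ0) * (s0 * ρ0 - s1 * ρ1)))
            (max (ρ0 * (s0 * (1 - ρ0) - s1 * (1 - ρ1)))
                 ((1 - ρ1) * (s1 * ρ1 - s0 * ρ0))) ∧
    T * max (max (ρ1 * (s1 * (1 - ρ1) - s0 * (1 - ρ0)))
                 ((1 - ρ0) * (s0 * ρ0 - s1 * ρ1)))
            (max (ρ0 * (s0 * (1 - ρ0) - s1 * (1 - ρ1)))
                 ((1 - ρ1) * (s1 * ρ1 - s0 * ρ0)))
      ≤ T * max s0 s1 := by
  constructor
  · rcases le_total (s0 * (1 - ρ0)) (s1 * (1 - ρ1)) with h | h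
    · exact le_max_of_le_left (le_max_of_le_left (by nlinarith))
    · exact le_max_of_le_right (le_max_of_le_left (by nlinarith))
  · apply mul_le_mul_of_nonneg_left _ hT.le
    have h0 : s0 ≤ max s0 s1 := le_max_left _ _
    have h1 : s1 ≤ max s0 s1 := le_max_right _ _
    refine max_le (max_le (le_trans ?_ h1) (le_trans ?_ h0)) (max_le (le_trans ?_ h0) (le_trans ?_ h1)) <;> nlinarith [mul_nonneg hρ00 hs0.le, mul_nonneg hρ10 hs1.le, mul_nonneg (mul_nonneg hρ00 hρ00) hs0.le, mul_nonneg (mul_nonneg hρ10 hρ10) hs1.le, mul_nonneg hρ00 (mul_nonneg hρ10 hs1.le), mul_nonneg hρ10 (mul_nonneg hρ00 hs0.le), mul_nonneg hρ10 (mul_nonneg hs0.le (by linarith : (0:ℝ) ≤ 1 - ρ0)), mul_nonneg hρ00 (mul_nonneg hs1.le (by linarith : (0:ℝ) ≤ 1 - ρ1)), mul_nonneg hs1.le (sq_nonneg (1 - ρ1)), mul_nonneg hs0.le (sq_nonneg (1 - ρ0))]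
end

section
/- In Case (1b) (where m̄_i·s_i ≥ m̄_{i-1}·s_{i-1} but (m̄_i+1)·s_i < (m̄_{i-1}+1)·s_{i-1}), if both functions switch on their extra machine simultaneously, then the maximum queue of F_i equals T·max{ ρ_{i-1}·(s_{i-1}(1−ρ_{i-1}) − s_i(1−ρ_i)), (1−ρ_{i-1})·(s_{i-1}ρ_{i-1} − s_iρ_i) } and the queue is empty at the switch-on instant. -/
set_option maxHeartbeats 1000000

open MeasureTheory

open Classical in
/-- Service rate of a function running `m̄` machines always and one extra machine of
speed `s` on during a periodically repeated window `[φ + kT, φ + kT + ρT)`. -/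
noncomputable def onRate14 (T φ mbar ρ s t : ℝ) : ℝ :=
  if ∃ k : ℤ, φ + k * T ≤ t ∧ t < φ + k * T + ρ * T then (mbar + 1) * s else mbar * s

/-- Fluid queue trajectory of `F_i`: initial content `q0` plus the integral of
(input rate from `F_{i-1}`) minus (service rate of `F_i`). -/
noncomputable def qTraj14 (T φ0 m0 ρ0 s0 φ1 m1 ρ1 s1 q0 t : ℝ) : ℝ :=
  q0 + ∫ x in (0 : ℝ)..t, (onRate14 T φ0 m0 ρ0 s0 x - onRate14 T φ1 m1 ρ1 s1 x)

lemma onRate14_meas (T φ m ρ s : ℝ) : Measurable (onRate14 T φ m ρ s) := by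
  have hS : MeasurableSet {t : ℝ | ∃ k : ℤ, φ + k * T ≤ t ∧ t < φ + k * T + ρ * T} := by
    have : {t : ℝ | ∃ k : ℤ, φ + k * T ≤ t ∧ t < φ + k * T + ρ * T}
        = ⋃ k : ℤ, Set.Ico (φ + k * T) (φ + k * T + ρ * T) := by
      ext t; simp [Set.mem_Ico]
    rw [this]
    exact MeasurableSet.iUnion fun k => measurableSet_Ico
  exact Measurable.ite hS measurable_const measurable_const

lemma onRate14_intInt (T φ m ρ s a b : ℝ) :
    IntervalIntegrable (onRate14 T φ m ρ s) volume a b := by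
  rw [intervalIntegrable_iff]
  haveI : IsFiniteMeasure (volume.restrict (Set.uIoc a b)) := by
    constructor
    rw [Measure.restrict_apply_univ, Set.uIoc]
    exact measure_Ioc_lt_top
  apply MeasureTheory.Integrable.mono' (g := fun _ => |m * s| + |(m + 1) * s|)
    (integrable_const _) ((onRate14_meas T φ m ρ s).aestronglyMeasurable.restrict)
  filter_upwards with x
  unfold onRate14
  split <;> rw [Real.norm_eq_abs] <;>
    linarith [abs_nonneg (m * s), abs_nonneg ((m + 1) * s)]

lemma onRate14_periodic (T φ m ρ s : ℝ) :
    Function.Periodic (onRate14 T φ m ρ s) T := by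
  intro t
  unfold onRate14
  congr 1
  apply propext
  constructor
  · rintro ⟨k, h1, h2⟩
    refine ⟨k - 1, ?_, ?_⟩ <;> push_cast <;> [linarith; linarith]
  · rintro ⟨k, h1, h2⟩
    refine ⟨k + 1, ?_, ?_⟩ <;> push_cast <;> [linarith; linarith]

lemma onRate14_eval (T φ m ρ s : ℝ) (hT : 0 < T) (hρn : 0 ≤ ρ) (hρl : ρ < 1)
    (u : ℝ) (hu0 : 0 ≤ u) (huT : u < T) :
    onRate14 T φ m ρ s (φ + u) = if u < ρ * T then (m + 1) * s else m * s := by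
  unfold onRate14
  congr 1
  apply propext
  constructor
  · rintro ⟨k, h1, h2⟩
    have hk0 : (0 : ℤ) ≤ k := by
      by_contra h
      push_neg at h
      have hk' : k ≤ -1 := by omega
      have hk : (k : ℝ) ≤ -1 := by exact_mod_cast hk'
      nlinarith
    have hk1 : k ≤ 0 := by
      by_contra h
      push_neg at h
      have hk : (1 : ℝ) ≤ k := by exact_mod_cast h
      nlinarith
    have : k = 0 := le_antisymm hk1 hk0
    subst this
    push_cast at h2
    linarith
  · intro h
    exact ⟨0, by push_cast; linarith, by push_cast; linarith⟩

/-- Case (1b) (`m̄_i s_i ≥ m̄_{i-1} s_{i-1}` but `(m̄_i+1)s_i < (m̄_{i-1}+1)s_{i-1}`):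
if both functions switch on their extra machine simultaneously (same offset `φ0`),
the queue stays nonnegative, its maximum equals
`T·max{ρ_{i-1}(s_{i-1}(1−ρ_{i-1}) − s_i(1−ρ_i)), (1−ρ_{i-1})(s_{i-1}ρ_{i-1} − s_iρ_i)}`,
and the queue is empty at the switch-on instant `φ0`. -/
theorem stmt14 (r s0 s1 T φ0 m0 m1 ρ0 ρ1 : ℝ)
    (hr : 0 < r) (hs0 : 0 < s0) (hs1 : 0 < s1) (hT : 0 < T) (hφ0 : 0 ≤ φ0)
    (hm0 : m0 = (⌊r / s0⌋ : ℤ)) (hρ0 : ρ0 = r / s0 - m0)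
    (hm1 : m1 = (⌊r / s1⌋ : ℤ)) (hρ1 : ρ1 = r / s1 - m1)
    (hcase1 : m0 * s0 ≤ m1 * s1) (hcase2 : (m1 + 1) * s1 < (m0 + 1) * s0) :
    ∃ q0 : ℝ,
      (∀ t ∈ Set.Ici (0 : ℝ), 0 ≤ qTraj14 T φ0 m0 ρ0 s0 φ0 m1 ρ1 s1 q0 t) ∧
      IsLUB ((fun t => qTraj14 T φ0 m0 ρ0 s0 φ0 m1 ρ1 s1 q0 t) '' Set.Ici (0 : ℝ))
        (T * max (ρ0 * (s0 * (1 - ρ0) - s1 * (1 - ρ1)))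
                 ((1 - ρ0) * (s0 * ρ0 - s1 * ρ1))) ∧
      qTraj14 T φ0 m0 ρ0 s0 φ0 m1 ρ1 s1 q0 φ0 = 0 := by
  have hρ0n : 0 ≤ ρ0 := by
    rw [hρ0, hm0]; have := Int.floor_le (r / s0); linarith
  have hρ0l : ρ0 < 1 := by
    rw [hρ0, hm0]; have := Int.lt_floor_add_one (r / s0); linarith
  have hρ1n : 0 ≤ ρ1 := by
    rw [hρ1, hm1]; have := Int.floor_le (r / s1); linarith
  have hρ1l : ρ1 < 1 := by
    rw [hρ1, hm1]; have := Int.lt_floor_add_one (r / s1); linarith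
  have hs0r : s0 * ρ0 = r - m0 * s0 := by
    rw [hρ0]; field_simp
  have hs1r : s1 * ρ1 = r - m1 * s1 := by
    rw [hρ1]; field_simp
  have hA : 0 ≤ s0 * ρ0 - s1 * ρ1 := by linarith
  have hB : 0 < s0 * (1 - ρ0) - s1 * (1 - ρ1) := by nlinarith
  set f : ℝ → ℝ := fun x => onRate14 T φ0 m0 ρ0 s0 x - onRate14 T φ0 m1 ρ1 s1 x with hfdef
  have hfint : ∀ a b : ℝ, IntervalIntegrable f volume a b := fun a b =>
    (onRate14_intInt T φ0 m0 ρ0 s0 a b).sub (onRate14_intInt T φ0 m1 ρ1 s1 a b)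
  have hfper : Function.Periodic f T := fun t => by
    simp only [hfdef, onRate14_periodic T φ0 m0 ρ0 s0 t, onRate14_periodic T φ0 m1 ρ1 s1 t]
  have hfval : ∀ u : ℝ, 0 ≤ u → u < T →
      f (φ0 + u) = (if u < ρ0 * T then (m0 + 1) * s0 else m0 * s0)
        - (if u < ρ1 * T then (m1 + 1) * s1 else m1 * s1) := by
    intro u hu0 huT
    simp only [hfdef, onRate14_eval T φ0 m0 ρ0 s0 hT hρ0n hρ0l u hu0 huT,
      onRate14_eval T φ0 m1 ρ1 s1 hT hρ1n hρ1l u hu0 huT]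
  set G : ℝ → ℝ := fun u => ∫ x in φ0..(φ0 + u), f x with hGdef
  have hG0 : G 0 = 0 := by
    simp only [hGdef, add_zero, intervalIntegral.integral_same]
  have hsplit : ∀ a b c : ℝ, a ≤ b →
      (∀ v : ℝ, a < v → v < b → f (φ0 + v) = c) → G b = G a + c * (b - a) := by
    intro a b c hab hc
    have h1 : ∫ x in (φ0 + a)..(φ0 + b), f x = c * (b - a) := by
      have hcongr : ∫ x in (φ0 + a)..(φ0 + b), f x = ∫ x in (φ0 + a)..(φ0 + b), c := by
        apply intervalIntegral.integral_congr_ae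
        have hbne : ∀ᵐ x : ℝ, x ≠ φ0 + b := by
          rw [MeasureTheory.ae_iff]
          simpa using measure_singleton (φ0 + b)
        filter_upwards [hbne] with x hx hmem
        rw [Set.uIoc_of_le (by linarith)] at hmem
        have hxb : x < φ0 + b := lt_of_le_of_ne hmem.2 hx
        have : x = φ0 + (x - φ0) := by ring
        rw [this]
        exact hc _ (by linarith [hmem.1]) (by linarith)
      rw [hcongr, intervalIntegral.integral_const, smul_eq_mul]
      ring
    have h2 := intervalIntegral.integral_add_adjacent_intervals
      (hfint φ0 (φ0 + a)) (hfint (φ0 + a) (φ0 + b))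
    simp only [hGdef]
    linarith [h1, h2]
  -- choose q0
  refine ⟨-(∫ x in (0:ℝ)..φ0, f x), ?_⟩
  have hq : ∀ t : ℝ, qTraj14 T φ0 m0 ρ0 s0 φ0 m1 ρ1 s1 (-(∫ x in (0:ℝ)..φ0, f x)) t
      = ∫ x in φ0..t, f x := by
    intro t
    have h := intervalIntegral.integral_interval_sub_left (hfint 0 t) (hfint 0 φ0)
    simp only [qTraj14]
    simp only [hfdef] at h ⊢
    linarith
  have hqG : ∀ u : ℝ, qTraj14 T φ0 m0 ρ0 s0 φ0 m1 ρ1 s1 (-(∫ x in (0:ℝ)..φ0, f x)) (φ0 + u)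
      = G u := fun u => hq (φ0 + u)
  set M : ℝ := T * max (ρ0 * (s0 * (1 - ρ0) - s1 * (1 - ρ1)))
      ((1 - ρ0) * (s0 * ρ0 - s1 * ρ1)) with hMdef
  have hρT : (0:ℝ) ≤ ρ0 * T := by positivity
  -- the piecewise formulas and bounds; case split on ρ0 vs ρ1
  have hbound : (∀ u : ℝ, 0 ≤ u → u ≤ T → 0 ≤ G u ∧ G u ≤ M) ∧ G (ρ0 * T) = M ∧ G T = 0 := by
    rcases le_total ρ0 ρ1 with hc | hc
    · -- ρ0 ≤ ρ1
      have hρρ : ρ0 * T ≤ ρ1 * T := mul_le_mul_of_nonneg_right hc hT.le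
      have hρ1T : ρ1 * T < T := by nlinarith
      have hG1 : ∀ u : ℝ, 0 ≤ u → u ≤ ρ0 * T →
          G u = (s0 * (1 - ρ0) - s1 * (1 - ρ1)) * u := by
        intro u hu0 hu1
        have := hsplit 0 u (s0 * (1 - ρ0) - s1 * (1 - ρ1)) (by linarith) ?_
        · rw [this, hG0]; ring
        · intro v hv0 hvu
          rw [hfval v (by linarith) (by nlinarith), if_pos (by linarith), if_pos (by linarith)]
          linear_combination hs0r - hs1r
      have hGρ0 : G (ρ0 * T) = (s0 * (1 - ρ0) - s1 * (1 - ρ1)) * (ρ0 * T) :=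
        hG1 _ hρT le_rfl
      have hG2 : ∀ u : ℝ, ρ0 * T ≤ u → u ≤ ρ1 * T →
          G u = G (ρ0 * T) - ((s0 * ρ0 - s1 * ρ1) + s1) * (u - ρ0 * T) := by
        intro u hu0 hu1
        have := hsplit (ρ0 * T) u (-((s0 * ρ0 - s1 * ρ1) + s1)) hu0 ?_
        · rw [this]; ring
        · intro v hv0 hvu
          rw [hfval v (by linarith) (by linarith), if_neg (by linarith), if_pos (by linarith)]
          linear_combination hs0r - hs1r
      have hGρ1 : G (ρ1 * T) = (s0 * ρ0 - s1 * ρ1) * ((1 - ρ1) * T) := by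
        rw [hG2 _ hρρ le_rfl, hGρ0]; ring
      have hG3 : ∀ u : ℝ, ρ1 * T ≤ u → u ≤ T →
          G u = G (ρ1 * T) - (s0 * ρ0 - s1 * ρ1) * (u - ρ1 * T) := by
        intro u hu0 hu1
        have := hsplit (ρ1 * T) u (-(s0 * ρ0 - s1 * ρ1)) hu0 ?_
        · rw [this]; ring
        · intro v hv0 hvu
          rw [hfval v (by linarith) (by linarith), if_neg (by linarith), if_neg (by linarith)]
          linear_combination hs0r - hs1r
      have hmx : M = T * (ρ0 * (s0 * (1 - ρ0) - s1 * (1 - ρ1))) := by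
        rw [hMdef, max_eq_left (by nlinarith [mul_nonneg hs1.le (sub_nonneg.2 hc)])]
      constructor
      · intro u hu0 huT
        rcases le_total u (ρ0 * T) with h1 | h1
        · rw [hG1 u hu0 h1, hmx]
          constructor
          · positivity
          · nlinarith
        · rcases le_total u (ρ1 * T) with h2 | h2
          · rw [hG2 u h1 h2, hGρ0, hmx]
            constructor
            · nlinarith [mul_nonneg hA (by linarith : (0:ℝ) ≤ 1 - ρ1),
                mul_le_mul_of_nonneg_left h2 (by linarith : (0:ℝ) ≤ (s0 * ρ0 - s1 * ρ1) + s1)]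
            · nlinarith [mul_nonneg (by linarith : (0:ℝ) ≤ (s0 * ρ0 - s1 * ρ1) + s1)
                (by linarith : (0:ℝ) ≤ u - ρ0 * T)]
          · rw [hG3 u h2 huT, hGρ1, hmx]
            constructor
            · nlinarith [mul_nonneg hA (by linarith : (0:ℝ) ≤ T - u)]
            · nlinarith [mul_nonneg hA (by linarith : (0:ℝ) ≤ u - ρ1 * T),
                mul_nonneg hA (by linarith : (0:ℝ) ≤ ρ1 * T - ρ0 * T),
                mul_nonneg hs1.le (mul_nonneg (by linarith : (0:ℝ) ≤ ρ1 - ρ0) hT.le)]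
      · constructor
        · rw [hGρ0, hmx]; ring
        · rw [hG3 T hρ1T.le le_rfl, hGρ1]; ring
    · -- ρ1 ≤ ρ0
      have hρρ : ρ1 * T ≤ ρ0 * T := mul_le_mul_of_nonneg_right hc hT.le
      have hρ0T : ρ0 * T < T := by nlinarith
      have hρ1Tn : (0:ℝ) ≤ ρ1 * T := by positivity
      have hG1 : ∀ u : ℝ, 0 ≤ u → u ≤ ρ1 * T →
          G u = (s0 * (1 - ρ0) - s1 * (1 - ρ1)) * u := by
        intro u hu0 hu1
        have := hsplit 0 u (s0 * (1 - ρ0) - s1 * (1 - ρ1)) (by linarith) ?_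
        · rw [this, hG0]; ring
        · intro v hv0 hvu
          rw [hfval v (by linarith) (by nlinarith), if_pos (by linarith), if_pos (by linarith)]
          linear_combination hs0r - hs1r
      have hGρ1 : G (ρ1 * T) = (s0 * (1 - ρ0) - s1 * (1 - ρ1)) * (ρ1 * T) :=
        hG1 _ hρ1Tn le_rfl
      have hG2 : ∀ u : ℝ, ρ1 * T ≤ u → u ≤ ρ0 * T →
          G u = G (ρ1 * T) + (s0 - (s0 * ρ0 - s1 * ρ1)) * (u - ρ1 * T) := by
        intro u hu0 hu1
        exact hsplit (ρ1 * T) u (s0 - (s0 * ρ0 - s1 * ρ1)) hu0 (by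
          intro v hv0 hvu
          rw [hfval v (by linarith) (by linarith), if_pos (by linarith), if_neg (by linarith)]
          linear_combination hs0r - hs1r)
      have hGρ0 : G (ρ0 * T) = (s0 * ρ0 - s1 * ρ1) * ((1 - ρ0) * T) := by
        rw [hG2 _ hρρ le_rfl, hGρ1]; ring
      have hG3 : ∀ u : ℝ, ρ0 * T ≤ u → u ≤ T →
          G u = G (ρ0 * T) - (s0 * ρ0 - s1 * ρ1) * (u - ρ0 * T) := by
        intro u hu0 hu1
        have := hsplit (ρ0 * T) u (-(s0 * ρ0 - s1 * ρ1)) hu0 ?_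
        · rw [this]; ring
        · intro v hv0 hvu
          rw [hfval v (by linarith) (by linarith), if_neg (by linarith), if_neg (by linarith)]
          linear_combination hs0r - hs1r
      have hmx : M = T * ((1 - ρ0) * (s0 * ρ0 - s1 * ρ1)) := by
        rw [hMdef, max_eq_right (by nlinarith [mul_nonneg hs1.le (sub_nonneg.2 hc)])]
      have hs0A : (0:ℝ) ≤ s0 - (s0 * ρ0 - s1 * ρ1) := by nlinarith
      constructor
      · intro u hu0 huT
        rcases le_total u (ρ1 * T) with h1 | h1
        · rw [hG1 u hu0 h1, hmx]
          constructor
          · positivity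
          · nlinarith [mul_le_mul_of_nonneg_left h1 hB.le,
              mul_nonneg hs1.le (mul_nonneg (by linarith : (0:ℝ) ≤ ρ0 - ρ1) hT.le)]
        · rcases le_total u (ρ0 * T) with h2 | h2
          · rw [hG2 u h1 h2, hGρ1, hmx]
            constructor
            · nlinarith [mul_nonneg hs0A (by linarith : (0:ℝ) ≤ u - ρ1 * T), mul_nonneg hB.le hρ1Tn]
            · nlinarith [mul_le_mul_of_nonneg_left h2 hs0A]
          · rw [hG3 u h2 huT, hGρ0, hmx]
            constructor
            · nlinarith [mul_nonneg hA (by linarith : (0:ℝ) ≤ T - u)]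
            · nlinarith [mul_nonneg hA (by linarith : (0:ℝ) ≤ u - ρ0 * T)]
      · constructor
        · rw [hGρ0, hmx]; ring
        · rw [hG3 T hρ0T.le le_rfl, hGρ0]; ring
  obtain ⟨hGb, hGmax, hGT⟩ := hbound
  have hGT' : (∫ x in φ0..(φ0 + T), f x) = 0 := hGT
  have hshift : ∀ (x : ℝ) (n : ℤ), (∫ a in φ0..(x + n * T), f a) = ∫ a in φ0..x, f a := by
    intro x n
    have h1 := hfper.intervalIntegral_add_zsmul_eq n x hfint
    have h2 := intervalIntegral.integral_add_adjacent_intervals (hfint φ0 x)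
      (hfint x (x + n • T))
    have h3 : (∫ a in x..(x + T), f a) = 0 := by
      rw [hfper.intervalIntegral_add_eq x φ0]; exact hGT'
    rw [h3, smul_zero] at h1
    rw [zsmul_eq_mul] at h1 h2
    rw [h1] at h2
    rw [← h2]
    ring
  have hqred : ∀ t : ℝ, ∃ u, 0 ≤ u ∧ u ≤ T ∧
      qTraj14 T φ0 m0 ρ0 s0 φ0 m1 ρ1 s1 (-(∫ x in (0:ℝ)..φ0, f x)) t = G u := by
    intro t
    set w : ℝ := (t - φ0) / T with hw
    refine ⟨T * Int.fract w, mul_nonneg hT.le (Int.fract_nonneg w), ?_, ?_⟩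
    · nlinarith [Int.fract_lt_one w, Int.fract_nonneg w]
    · have ht : t = (φ0 + T * Int.fract w) + (⌊w⌋ : ℤ) * T := by
        have : Int.fract w = w - ⌊w⌋ := rfl
        rw [this, hw]
        field_simp
        ring
      rw [hq t, ht, hshift (φ0 + T * Int.fract w) ⌊w⌋]
  refine ⟨?_, ?_, ?_⟩
  · intro t _
    obtain ⟨u, hu0, huT, hQt⟩ := hqred t
    rw [hQt]
    exact (hGb u hu0 huT).1
  · constructor
    · rintro y ⟨t, _, rfl⟩
      obtain ⟨u, hu0, huT, hQt⟩ := hqred t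
      show qTraj14 T φ0 m0 ρ0 s0 φ0 m1 ρ1 s1 (-(∫ x in (0:ℝ)..φ0, f x)) t ≤ _
      rw [hQt]
      exact (hGb u hu0 huT).2
    · intro b hb
      apply hb
      refine ⟨φ0 + ρ0 * T, ?_, ?_⟩
      · exact Set.mem_Ici.2 (by linarith [hρT])
      · show qTraj14 T φ0 m0 ρ0 s0 φ0 m1 ρ1 s1 (-(∫ x in (0:ℝ)..φ0, f x)) (φ0 + ρ0 * T) = _
        rw [hqG (ρ0 * T), hGmax]
  · rw [hq φ0, intervalIntegral.integral_same]
end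

section
/- In Case (2b) the per-stage delay increment is D_i* = (T/r)·s_i·(1−ρ_i)²·(s_iρ_i + s_{i-1}ρ_{i-1})/(s_i(1−ρ_i) + s_{i-1}ρ_{i-1}), which is nonnegative whenever ρ_{i-1}, ρ_i ∈ [0,1) and s_{i-1}, s_i > 0. -/
/-- Case (2b) per-stage delay increment: with
`q = T(1−ρ_i)(s_iρ_i + s_{i-1}ρ_{i-1})` and
`Δt = −q/(s_i(1−ρ_i) + s_{i-1}ρ_{i-1})`, the increment
`D* = q/r + (s_{i-1}/r)·Δt·ρ_{i-1}` equals
`(T/r)·s_i·(1−ρ_i)²·(s_iρ_i + s_{i-1}ρ_{i-1})/(s_i(1−ρ_i) + s_{i-1}ρ_{i-1})`,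
which is nonnegative for `ρ_{i-1}, ρ_i ∈ [0,1)`, `s_{i-1}, s_i > 0`. -/
theorem stmt16 (r s0 s1 ρ0 ρ1 T : ℝ) (hr : 0 < r) (hs0 : 0 < s0) (hs1 : 0 < s1)
    (hρ00 : 0 ≤ ρ0) (hρ01 : ρ0 < 1) (hρ10 : 0 ≤ ρ1) (hρ11 : ρ1 < 1) (hT : 0 < T) :
    (T * (1 - ρ1) * (s1 * ρ1 + s0 * ρ0)) / r +
        (s0 / r) *
          (-(T * (1 - ρ1) * (s1 * ρ1 + s0 * ρ0)) / (s1 * (1 - ρ1) + s0 * ρ0)) * ρ0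
      = (T / r) * s1 * (1 - ρ1) ^ 2 *
          ((s1 * ρ1 + s0 * ρ0) / (s1 * (1 - ρ1) + s0 * ρ0)) ∧
    0 ≤ (T / r) * s1 * (1 - ρ1) ^ 2 *
          ((s1 * ρ1 + s0 * ρ0) / (s1 * (1 - ρ1) + s0 * ρ0)) := by
  have hden : 0 < s1 * (1 - ρ1) + s0 * ρ0 :=
    add_pos_of_pos_of_nonneg (mul_pos hs1 (by linarith)) (mul_nonneg hs0.le hρ00)
  constructor
  · have hinv : (s1 * (1 - ρ1) + s0 * ρ0) * (s1 * (1 - ρ1) + s0 * ρ0)⁻¹ = 1 :=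
      mul_inv_cancel₀ hden.ne'
    simp only [div_eq_mul_inv]
    linear_combination (-(T * (1 - ρ1) * (s1 * ρ1 + s0 * ρ0) * r⁻¹)) * hinv
  · have hnum : 0 ≤ s1 * ρ1 + s0 * ρ0 :=
      add_nonneg (mul_nonneg hs1.le hρ10) (mul_nonneg hs0.le hρ00)
    positivity
end
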